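/- Let (M_n) be positive integers with M_{n+1}/M_n → ∞ as n → ∞. Then for every K ∈ ℕ, C > 0 and ε > 0, Σ_{1≤n'<n≤2N} Σ_{j,j'=1}^{N^K} (jj')^{-1} · 1[ |j·M_n − j'·M_{n'}| < (1/2)·q^{-C·N^{1−ε}}·M_{n'} ] = o(N) as N → ∞, where q > 1 is any Hadamard ratio for (M_n). -/

import Mathlib

open Real Filter Asymptotics

lemma sum_le_single_bound {s : Finset ℕ} {f : ℕ → ℝ} {B : ℝ} (hB : 0 ≤ B)
    (hle : ∀ x ∈ s, f x ≤ B)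
    (huniq : ∀ x ∈ s, ∀ y ∈ s, f x ≠ 0 → f y ≠ 0 → x = y) :
    ∑ x ∈ s, f x ≤ B := by
  by_cases h : ∀ x ∈ s, f x = 0
  · rw [Finset.sum_eq_zero h]; exact hB
  · push_neg at h
    obtain ⟨x₀, hx₀, hf₀⟩ := h
    rw [← Finset.add_sum_erase s f hx₀]
    have hz : ∑ x ∈ s.erase x₀, f x = 0 := by
      refine Finset.sum_eq_zero fun y hy => ?_
      by_contra hfy
      exact (Finset.mem_erase.mp hy).1 (huniq y (Finset.mem_of_mem_erase hy) x₀ hx₀ hfy hf₀)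
    rw [hz, add_zero]
    exact hle x₀ hx₀

lemma sq_inv_sum_le (m : ℕ) : ∑ j ∈ Finset.Icc 1 m, ((j:ℝ)^2)⁻¹ ≤ 2 := by
  have H : ∀ m : ℕ, ∑ j ∈ Finset.Icc 1 m, ((j:ℝ)^2)⁻¹ ≤ 2 - 2/((m:ℝ)+1) := by
    intro m
    induction m with
    | zero => simp
    | succ m ih =>
      rw [Finset.sum_Icc_succ_top (by omega : 1 ≤ m + 1)]
      have hm : (0:ℝ) < (m:ℝ) + 1 := by positivity
      have hm2 : (0:ℝ) < (m:ℝ) + 2 := by positivity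
      have hkey : ((((m+1) : ℕ)) : ℝ) = (m:ℝ) + 1 := by push_cast; ring
      rw [hkey]
      have hstep : (((m:ℝ)+1)^2)⁻¹ ≤ 2/((m:ℝ)+1) - 2/((m:ℝ)+2) := by
        have he : 2/((m:ℝ)+1) - 2/((m:ℝ)+2) = 2/(((m:ℝ)+1)*((m:ℝ)+2)) := by
          field_simp; ring
        rw [he, inv_eq_one_div, div_le_div_iff₀ (by positivity) (by positivity)]
        nlinarith
      have : (m:ℝ) + 1 + 1 = (m:ℝ) + 2 := by ring
      rw [this]
      linarith
  have := H m
  have : (0:ℝ) < 2/((m:ℝ)+1) := by positivity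
  linarith [H m]

lemma geom_range_le {x : ℝ} (hx0 : 0 ≤ x) (hx1 : x < 1) (k : ℕ) :
    ∑ i ∈ Finset.range k, x ^ i ≤ (1 - x)⁻¹ := by
  have h := Summable.sum_le_tsum (Finset.range k) (fun i _ => pow_nonneg hx0 i)
    (summable_geometric_of_lt_one hx0 hx1)
  rwa [tsum_geometric_of_lt_one hx0 hx1] at h

lemma growth_pow (M : ℕ → ℕ) (ρ : ℝ) (hρ : 0 ≤ ρ) (a : ℕ) :
    ∀ b, a ≤ b → (∀ m, a ≤ m → m < b → ρ * M m ≤ M (m+1)) →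
      ρ ^ (b - a) * M a ≤ M b := by
  intro b
  induction b with
  | zero => intro hab _; interval_cases a; simp
  | succ b ih =>
    intro hab h
    rcases Nat.lt_or_ge a (b+1) with hlt | hge
    · have hab' : a ≤ b := by omega
      have h1 := ih hab' (fun m hm hm' => h m hm (by omega))
      have h2 := h b hab' (by omega)
      have he : (b + 1 - a) = (b - a) + 1 := by omega
      rw [he, pow_succ]
      calc ρ ^ (b-a) * ρ * (M a : ℝ) = ρ * (ρ ^ (b-a) * M a) := by ring
        _ ≤ ρ * M b := mul_le_mul_of_nonneg_left h1 hρ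
        _ ≤ M (b+1) := h2
    · have : a = b + 1 := by omega
      subst this; simp

lemma pair_bound (M : ℕ → ℕ) (hMpos : ∀ n, 0 < M n) (n n' P : ℕ)
    (δ r : ℝ) (hδ0 : 0 < δ) (hδ : δ ≤ 1/2) (hr : 1 ≤ r)
    (hrM : r * M n' ≤ M n) :
    ∑ j ∈ Finset.Icc 1 P, ∑ j' ∈ Finset.Icc 1 P,
      (if |(j : ℝ) * M n - (j' : ℝ) * M n'| < δ * M n'
        then ((j : ℝ) * (j' : ℝ))⁻¹ else 0) ≤ 4 / r := by
  have hr0 : (0:ℝ) < r := lt_of_lt_of_le one_pos hr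
  have hM' : (0:ℝ) < M n' := by exact_mod_cast hMpos n'
  have step1 : ∀ j ∈ Finset.Icc 1 P,
      ∑ j' ∈ Finset.Icc 1 P,
        (if |(j : ℝ) * M n - (j' : ℝ) * M n'| < δ * M n'
          then ((j : ℝ) * (j' : ℝ))⁻¹ else 0) ≤ 2 / ((j:ℝ)^2 * r) := by
    intro j hj
    have hjR : (1:ℝ) ≤ (j:ℝ) := by exact_mod_cast (Finset.mem_Icc.mp hj).1
    have hjpos : (0:ℝ) < (j:ℝ) := lt_of_lt_of_le one_pos hjR
    have hjMn : ((j:ℝ)*r) * M n' ≤ (j:ℝ) * M n := by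
      calc ((j:ℝ)*r) * M n' = (j:ℝ) * (r * M n') := by ring
        _ ≤ (j:ℝ) * M n := mul_le_mul_of_nonneg_left hrM hjpos.le
    refine sum_le_single_bound (by positivity) ?_ ?_
    · intro j' hj'
      have hj'1 : (1:ℝ) ≤ (j':ℝ) := by
        exact_mod_cast (Finset.mem_Icc.mp hj').1
      split_ifs with hcond
      · obtain ⟨_, hup⟩ := abs_lt.mp hcond
        -- j*r < j' + 1/2
        have h2 : ((j:ℝ)*r) * M n' < ((j':ℝ) + 1/2) * M n' := by
          nlinarith
        have h3 : (j:ℝ)*r < (j':ℝ) + 1/2 := (mul_lt_mul_iff_of_pos_right hM').mp h2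
        have hjr1 : (1:ℝ) ≤ (j:ℝ)*r := by nlinarith
        have hj'ge : (j:ℝ)*r/2 ≤ (j':ℝ) := by linarith
        calc ((j:ℝ)*(j':ℝ))⁻¹ ≤ ((j:ℝ)^2*r/2)⁻¹ := by
              apply inv_anti₀ (by positivity)
              nlinarith
          _ = 2/((j:ℝ)^2*r) := by rw [inv_div]
      · positivity
    · intro x hx y hy hfx hfy
      have hcx : |(j : ℝ) * M n - (x : ℝ) * M n'| < δ * M n' := by
        by_contra h; rw [if_neg h] at hfx; exact hfx rfl
      have hcy : |(j : ℝ) * M n - (y : ℝ) * M n'| < δ * M n' := by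
        by_contra h; rw [if_neg h] at hfy; exact hfy rfl
      have habs : |(x:ℝ) - (y:ℝ)| * M n' < 2 * δ * M n' := by
        have h3 : |(x:ℝ) - y| * M n' = |(x:ℝ)*M n' - (y:ℝ)*M n'| := by
          rw [show |(x:ℝ)*M n' - (y:ℝ)*M n'| = |((x:ℝ)-y) * M n'| by ring_nf,
            abs_mul, abs_of_pos hM']
        have h4 := abs_sub_le ((x:ℝ)*M n') ((j:ℝ)*M n) ((y:ℝ)*M n')
        rw [h3]
        calc |(x:ℝ)*M n' - (y:ℝ)*M n'| ≤ |(x:ℝ)*M n' - (j:ℝ)*M n| + |(j:ℝ)*M n - (y:ℝ)*M n'| := h4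
          _ = |(j:ℝ)*M n - (x:ℝ)*M n'| + |(j:ℝ)*M n - (y:ℝ)*M n'| := by rw [abs_sub_comm]
          _ < δ * M n' + δ * M n' := add_lt_add hcx hcy
          _ = 2 * δ * M n' := by ring
      have h1 : |(x:ℝ) - (y:ℝ)| < 1 := by
        have := (mul_lt_mul_iff_of_pos_right hM').mp habs
        linarith
      have hx' : x < y + 1 := by exact_mod_cast (by have := abs_lt.mp h1; push_cast; linarith : (x:ℝ) < (y:ℝ) + 1)
      have hy' : y < x + 1 := by exact_mod_cast (by have := abs_lt.mp h1; push_cast; linarith : (y:ℝ) < (x:ℝ) + 1)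
      omega
  calc ∑ j ∈ Finset.Icc 1 P, ∑ j' ∈ Finset.Icc 1 P,
        (if |(j : ℝ) * M n - (j' : ℝ) * M n'| < δ * M n'
          then ((j : ℝ) * (j' : ℝ))⁻¹ else 0)
      ≤ ∑ j ∈ Finset.Icc 1 P, 2 / ((j:ℝ)^2 * r) := Finset.sum_le_sum step1
    _ = (2/r) * ∑ j ∈ Finset.Icc 1 P, ((j:ℝ)^2)⁻¹ := by
        rw [Finset.mul_sum]
        refine Finset.sum_congr rfl fun j hj => ?_
        have hj1 : (1:ℝ) ≤ (j:ℝ) := by exact_mod_cast (Finset.mem_Icc.mp hj).1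
        field_simp
    _ ≤ (2/r) * 2 := mul_le_mul_of_nonneg_left (sq_inv_sum_le P) (by positivity)
    _ = 4 / r := by ring

lemma tail_geom (ρ : ℝ) (hρ : 1 < ρ) (n' Nb : ℕ) :
    ∑ n ∈ Finset.Icc 1 Nb, (if n' < n then 4 * (ρ⁻¹)^(n-n') else 0) ≤ 4/(ρ-1) := by
  have hρ0 : (0:ℝ) < ρ := by linarith
  have hx0 : (0:ℝ) ≤ ρ⁻¹ := by positivity
  have hx1 : ρ⁻¹ < 1 := inv_lt_one_of_one_lt₀ hρ
  calc ∑ n ∈ Finset.Icc 1 Nb, (if n' < n then 4 * (ρ⁻¹)^(n-n') else 0)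
      = ∑ n ∈ (Finset.Icc 1 Nb).filter (fun n => n' < n), 4 * (ρ⁻¹)^(n-n') :=
        (Finset.sum_filter _ _).symm
    _ ≤ ∑ n ∈ Finset.Ico (n'+1) (Nb+1), 4 * (ρ⁻¹)^(n-n') := by
        apply Finset.sum_le_sum_of_subset_of_nonneg
        · intro n hn
          simp only [Finset.mem_filter, Finset.mem_Icc] at hn
          simp only [Finset.mem_Ico]
          omega
        · intros; positivity
    _ = ∑ i ∈ Finset.range (Nb+1-(n'+1)), 4 * (ρ⁻¹)^((n'+1+i)-n') := by
        rw [Finset.sum_Ico_eq_sum_range]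
    _ = ∑ i ∈ Finset.range (Nb+1-(n'+1)), 4 * ρ⁻¹ * (ρ⁻¹)^i := by
        refine Finset.sum_congr rfl fun i _ => ?_
        have he : (n'+1+i)-n' = i+1 := by omega
        rw [he, pow_succ]; ring
    _ = 4 * ρ⁻¹ * ∑ i ∈ Finset.range (Nb+1-(n'+1)), (ρ⁻¹)^i := by
        rw [Finset.mul_sum]
    _ ≤ 4 * ρ⁻¹ * (1 - ρ⁻¹)⁻¹ :=
        mul_le_mul_of_nonneg_left (geom_range_le hx0 hx1 _) (by positivity)
    _ = 4/(ρ-1) := by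
        have h1 : 1 - ρ⁻¹ = (ρ-1)/ρ := by field_simp
        rw [h1, inv_div, eq_div_iff (by intro h; rw [sub_eq_zero] at h; exact absurd h.symm (ne_of_lt hρ))]
        have h2 : ρ ≠ 0 := ne_of_gt hρ0
        have h3 : ρ - 1 ≠ 0 := by intro h; rw [sub_eq_zero] at h; exact absurd h.symm (ne_of_lt hρ)
        field_simp [h3]

/-- For a superlacunary sequence (`M_{n+1}/M_n → ∞`), the Diophantine counting condition
(251) of the paper holds: the weighted count of near-solutions is `o(N)`. -/
theorem stmt_12 (M : ℕ → ℕ) (hMpos : ∀ n, 0 < M n)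
    (hsuper : Tendsto (fun n => (M (n + 1) : ℝ) / (M n : ℝ)) atTop atTop)
    (q : ℝ) (hq : 1 < q) (hlac : ∀ n, q * M n ≤ M (n + 1))
    (K : ℕ) (hK : 1 ≤ K) (C : ℝ) (hC : 0 < C) (ε : ℝ) (hε : 0 < ε) :
    (fun N : ℕ =>
        ∑ n ∈ Finset.Icc 1 (2 * N), ∑ n' ∈ Finset.Ico 1 n,
          ∑ j ∈ Finset.Icc 1 (N ^ K), ∑ j' ∈ Finset.Icc 1 (N ^ K),
            if |(j : ℝ) * M n - (j' : ℝ) * M n'| <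
                (1 / 2) * q ^ (-(C * (N : ℝ) ^ ((1 : ℝ) - ε))) * M n'
            then ((j : ℝ) * (j' : ℝ))⁻¹ else 0) =o[atTop] (fun N : ℕ => (N : ℝ)) := by
  have hq0 : (0:ℝ) < q := by linarith
  rw [isLittleO_iff]
  intro c hc
  -- choose R
  set R := max q (1 + 16/c) with hRdef
  have hR1 : 1 < R := lt_of_lt_of_le hq (le_max_left _ _)
  have hRc : 8/(R-1) ≤ c/2 := by
    have h16 : 16/c ≤ R - 1 := by
      have := le_max_right q (1+16/c); simp only [← hRdef] at this; linarith
    have hc16 : c * (16/c) = 16 := by field_simp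
    rw [div_le_div_iff₀ (by nlinarith [div_pos (by norm_num : (0:ℝ) < 16) hc] : (0:ℝ) < R - 1) (by norm_num : (0:ℝ) < 2)]
    nlinarith [div_pos (by norm_num : (0:ℝ) < 16) hc]
  -- choose n₀
  obtain ⟨n₀, hn₀⟩ := eventually_atTop.mp (hsuper.eventually_ge_atTop R)
  have hRM : ∀ m, n₀ ≤ m → R * M m ≤ M (m+1) := by
    intro m hm
    have h1 := hn₀ m hm
    have hMm : (0:ℝ) < M m := by exact_mod_cast hMpos m
    rw [le_div_iff₀ hMm] at h1
    linarith
  -- the scale function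
  set ρ : ℕ → ℝ := fun n' => if n₀ ≤ n' then R else q with hρdef
  have hρ1 : ∀ n', 1 < ρ n' := by
    intro n'; simp only [hρdef]; split_ifs
    · exact hR1
    · exact hq
  -- key global bound
  have key : ∀ N : ℕ,
      (∑ n ∈ Finset.Icc 1 (2 * N), ∑ n' ∈ Finset.Ico 1 n,
          ∑ j ∈ Finset.Icc 1 (N ^ K), ∑ j' ∈ Finset.Icc 1 (N ^ K),
            if |(j : ℝ) * M n - (j' : ℝ) * M n'| <
                (1 / 2) * q ^ (-(C * (N : ℝ) ^ ((1 : ℝ) - ε))) * M n'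
            then ((j : ℝ) * (j' : ℝ))⁻¹ else 0)
        ≤ (n₀:ℝ) * (4/(q-1)) + (2*(N:ℝ)) * (4/(R-1)) := by
    intro N
    set δ : ℝ := (1 / 2) * q ^ (-(C * (N : ℝ) ^ ((1 : ℝ) - ε))) with hδdef
    have hδ0 : 0 < δ := by
      have := Real.rpow_pos_of_pos hq0 (-(C * (N : ℝ) ^ ((1 : ℝ) - ε)))
      simp only [hδdef]; positivity
    have hδh : δ ≤ 1/2 := by
      have h1 : q ^ (-(C * (N : ℝ) ^ ((1 : ℝ) - ε))) ≤ 1 :=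
        Real.rpow_le_one_of_one_le_of_nonpos hq.le
          (neg_nonpos.mpr (mul_nonneg hC.le (Real.rpow_nonneg (Nat.cast_nonneg N) _)))
      simp only [hδdef]
      linarith
    -- per-pair bound
    have hF : ∀ n n', n' < n →
        (∑ j ∈ Finset.Icc 1 (N ^ K), ∑ j' ∈ Finset.Icc 1 (N ^ K),
          if |(j : ℝ) * M n - (j' : ℝ) * M n'| < δ * M n'
          then ((j : ℝ) * (j' : ℝ))⁻¹ else 0)
        ≤ 4 * ((ρ n')⁻¹)^(n-n') := by
      intro n n' hlt
      have hρ0 : (0:ℝ) < ρ n' := lt_trans one_pos (hρ1 n')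
      have hgrow : (ρ n') ^ (n - n') * M n' ≤ M n := by
        apply growth_pow M (ρ n') hρ0.le n' n hlt.le
        intro m hm _
        simp only [hρdef]
        split_ifs with h
        · exact hRM m (le_trans h hm)
        · exact hlac m
      have h4 : 4 / (ρ n') ^ (n - n') = 4 * ((ρ n')⁻¹)^(n-n') := by
        rw [inv_pow, div_eq_mul_inv]
      rw [← h4]
      exact pair_bound M hMpos n n' (N^K) δ ((ρ n') ^ (n - n')) hδ0 hδh
        (one_le_pow₀ (hρ1 n').le) hgrow
    calc (∑ n ∈ Finset.Icc 1 (2 * N), ∑ n' ∈ Finset.Ico 1 n,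
          ∑ j ∈ Finset.Icc 1 (N ^ K), ∑ j' ∈ Finset.Icc 1 (N ^ K),
            if |(j : ℝ) * M n - (j' : ℝ) * M n'| < δ * M n'
            then ((j : ℝ) * (j' : ℝ))⁻¹ else 0)
        ≤ ∑ n ∈ Finset.Icc 1 (2 * N), ∑ n' ∈ Finset.Icc 1 (2 * N),
            (if n' < n then 4 * ((ρ n')⁻¹)^(n-n') else 0) := by
          apply Finset.sum_le_sum
          intro n hn
          have hn2N : n ≤ 2 * N := (Finset.mem_Icc.mp hn).2
          calc (∑ n' ∈ Finset.Ico 1 n,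
              ∑ j ∈ Finset.Icc 1 (N ^ K), ∑ j' ∈ Finset.Icc 1 (N ^ K),
                if |(j : ℝ) * M n - (j' : ℝ) * M n'| < δ * M n'
                then ((j : ℝ) * (j' : ℝ))⁻¹ else 0)
              ≤ ∑ n' ∈ Finset.Ico 1 n, (if n' < n then 4 * ((ρ n')⁻¹)^(n-n') else 0) := by
                apply Finset.sum_le_sum
                intro n' hn'
                have hlt : n' < n := (Finset.mem_Ico.mp hn').2
                rw [if_pos hlt]
                exact hF n n' hlt
            _ ≤ ∑ n' ∈ Finset.Icc 1 (2 * N), (if n' < n then 4 * ((ρ n')⁻¹)^(n-n') else 0) := by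
                apply Finset.sum_le_sum_of_subset_of_nonneg
                · intro n' hn'
                  have := Finset.mem_Ico.mp hn'
                  rw [Finset.mem_Icc]
                  omega
                · intro n' _ _
                  have hρ0 : (0:ℝ) < ρ n' := lt_trans one_pos (hρ1 n')
                  split_ifs
                  · positivity
                  · exact le_refl 0
        _ = ∑ n' ∈ Finset.Icc 1 (2 * N), ∑ n ∈ Finset.Icc 1 (2 * N),
            (if n' < n then 4 * ((ρ n')⁻¹)^(n-n') else 0) := Finset.sum_comm
        _ ≤ ∑ n' ∈ Finset.Icc 1 (2 * N), 4/(ρ n' - 1) := by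
            apply Finset.sum_le_sum
            intro n' _
            exact tail_geom (ρ n') (hρ1 n') n' (2*N)
        _ ≤ ∑ n' ∈ Finset.Icc 1 (2 * N), ((if n' < n₀ then 4/(q-1) else 0) + 4/(R-1)) := by
            apply Finset.sum_le_sum
            intro n' _
            simp only [hρdef]
            by_cases h : n₀ ≤ n'
            · rw [if_pos h, if_neg (by omega)]
              have : (0:ℝ) ≤ 4/(q-1) := div_nonneg (by norm_num) (by linarith)
              linarith [le_refl (4/(R-1))]
            · rw [if_neg h, if_pos (by omega)]
              have : (0:ℝ) ≤ 4/(R-1) := div_nonneg (by norm_num) (by linarith)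
              linarith
        _ ≤ (n₀:ℝ) * (4/(q-1)) + (2*(N:ℝ)) * (4/(R-1)) := by
            rw [Finset.sum_add_distrib, Finset.sum_const, Nat.card_Icc]
            have hA : (0:ℝ) ≤ 4/(q-1) := div_nonneg (by norm_num) (by linarith)
            have hB : (0:ℝ) ≤ 4/(R-1) := div_nonneg (by norm_num) (by linarith)
            have hcard : ∑ n' ∈ Finset.Icc 1 (2 * N), (if n' < n₀ then 4/(q-1) else 0)
                ≤ (n₀:ℝ) * (4/(q-1)) := by
              rw [← Finset.sum_filter, Finset.sum_const, nsmul_eq_mul]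
              have hsub : (Finset.Icc 1 (2*N)).filter (fun n' => n' < n₀) ⊆ Finset.range n₀ :=
                fun x hx => Finset.mem_range.mpr (Finset.mem_filter.mp hx).2
              have hcard' := Finset.card_le_card hsub
              rw [Finset.card_range] at hcard'
              exact mul_le_mul_of_nonneg_right (by exact_mod_cast hcard') hA
            have h2N : 2*N+1-1 = 2*N := by omega
            rw [h2N, nsmul_eq_mul]
            push_cast
            linarith
  -- conclude
  have nonneg : ∀ N : ℕ, (0:ℝ) ≤
      ∑ n ∈ Finset.Icc 1 (2 * N), ∑ n' ∈ Finset.Ico 1 n,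
          ∑ j ∈ Finset.Icc 1 (N ^ K), ∑ j' ∈ Finset.Icc 1 (N ^ K),
            if |(j : ℝ) * M n - (j' : ℝ) * M n'| <
                (1 / 2) * q ^ (-(C * (N : ℝ) ^ ((1 : ℝ) - ε))) * M n'
            then ((j : ℝ) * (j' : ℝ))⁻¹ else 0 := by
    intro N
    refine Finset.sum_nonneg fun n _ => Finset.sum_nonneg fun n' _ =>
      Finset.sum_nonneg fun j _ => Finset.sum_nonneg fun j' _ => ?_
    split_ifs
    · positivity
    · exact le_refl 0
  have hq1 : (0:ℝ) < q - 1 := by linarith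
  set N₁ : ℕ := ⌈((n₀:ℝ) * (4/(q-1))) / (c/2)⌉₊ with hN₁def
  filter_upwards [eventually_ge_atTop N₁] with N hN
  rw [Real.norm_of_nonneg (nonneg N), Real.norm_natCast]
  have hceil : ((n₀:ℝ) * (4/(q-1))) / (c/2) ≤ (N:ℝ) :=
    le_trans (Nat.le_ceil _) (by exact_mod_cast hN)
  have h1 : (n₀:ℝ) * (4/(q-1)) ≤ (c/2) * N := by
    rw [div_le_iff₀ (half_pos hc)] at hceil
    linarith
  have h2 : (2*(N:ℝ)) * (4/(R-1)) ≤ (c/2) * N := by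
    have := mul_le_mul_of_nonneg_right hRc (Nat.cast_nonneg N : (0:ℝ) ≤ N)
    calc (2*(N:ℝ)) * (4/(R-1)) = (8/(R-1)) * N := by ring
      _ ≤ (c/2) * N := this
  calc _ ≤ (n₀:ℝ) * (4/(q-1)) + (2*(N:ℝ)) * (4/(R-1)) := key N
    _ ≤ (c/2) * N + (c/2) * N := add_le_add h1 h2
    _ = c * N := by ring
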